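/- There is a weight-preserving bijection between pairs (λ, μ) with λ self-conjugate and μ doubled distinct, and doubled distinct partitions ν, such that |ν| = 2(|λ| + |μ|) and δ_ν = δ_λ · δ_μ; explicitly, ν is the unique doubled distinct partition whose multiset of principal hook lengths is {2h : h ∈ Δ}, where Δ is the union of the principal hook lengths of λ and μ. -/

import Mathlib

open scoped Classical

/-- An integer partition, given by its (0-indexed) sequence of parts. -/
structure IntPartition where
  parts : ℕ → ℕ
  antitone : Antitone parts
  finite_support : (Function.support parts).Finite

namespace IntPartition

/-- The weight `|λ|` of a partition: the sum of its parts. -/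
noncomputable def weight (p : IntPartition) : ℕ := p.finite_support.toFinset.sum p.parts

/-- The conjugate partition, as a function: `conj j` is the number of parts `> j`. -/
noncomputable def conj (p : IntPartition) (j : ℕ) : ℕ := {i | j < p.parts i}.ncard

/-- The cells (boxes) of the Ferrers diagram, 0-indexed. -/
def cells (p : IntPartition) : Set (ℕ × ℕ) := {c | c.2 < p.parts c.1}

lemma cells_finite (p : IntPartition) : p.cells.Finite := by
  have hsub : p.cells ⊆ (Function.support p.parts) ×ˢ (Set.Iio (p.parts 0)) := by
    rintro ⟨i, j⟩ h
    have hj : j < p.parts i := h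
    constructor
    · simp only [Function.mem_support]
      omega
    · exact lt_of_lt_of_le hj (p.antitone (Nat.zero_le i))
  exact (p.finite_support.prod (Set.finite_Iio _)).subset hsub

/-- The cells of the Ferrers diagram as a finset. -/
noncomputable def cellsFinset (p : IntPartition) : Finset (ℕ × ℕ) := p.cells_finite.toFinset

/-- Hook length of the (0-indexed) box `(i,j)`:  `λ_i - j + λ*_j - i - 1` (1-indexed formula). -/
noncomputable def hook (p : IntPartition) (i j : ℕ) : ℕ := p.parts i + p.conj j - i - j - 1

/-- The multiset of hook lengths of all boxes of `p`. -/
noncomputable def hooks (p : IntPartition) : Multiset ℕ :=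
  p.cellsFinset.val.map fun c => p.hook c.1 c.2

/-- The Durfee length: the side of the largest square contained in the diagram. -/
noncomputable def durfee (p : IntPartition) : ℕ := {i | i < p.parts i}.ncard

/-- The sign `δ_λ = (-1)^{D(λ)}`. -/
noncomputable def delta (p : IntPartition) : ℤ := (-1) ^ p.durfee

/-- Self-conjugate partitions: `λ = λ*`. -/
noncomputable def IsSelfConjugate (p : IntPartition) : Prop := ∀ j, p.conj j = p.parts j

/-- Doubled distinct partitions: `λ_i = λ*_i + 1` for `i` in the Durfee square. -/
noncomputable def IsDoubledDistinct (p : IntPartition) : Prop :=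
  ∀ i < p.durfee, p.parts i = p.conj i + 1

/-- `t`-cores: partitions with no hook length divisible by `t`. -/
noncomputable def IsCore (t : ℕ) (p : IntPartition) : Prop := ∀ h ∈ p.hooks, ¬ t ∣ h

/-- The multiset of signed hook lengths `ε_h · h`, where `ε_h = -1` for boxes strictly
above the diagonal and `1` otherwise. -/
noncomputable def signedHooks (p : IntPartition) : Multiset ℤ :=
  p.cellsFinset.val.map fun c => (if c.1 < c.2 then -1 else 1) * (p.hook c.1 c.2 : ℤ)

/-- The multiset of signed hook lengths `ε_h · h` over boxes whose hook length is a
multiple of `t`. -/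
noncomputable def signedHooksT (t : ℕ) (p : IntPartition) : Multiset ℤ :=
  (p.cellsFinset.filter fun c => t ∣ p.hook c.1 c.2).val.map
    fun c => (if c.1 < c.2 then -1 else 1) * (p.hook c.1 c.2 : ℤ)

/-- The multiset of principal hook lengths (hooks of diagonal boxes). -/
noncomputable def principalHooks (p : IntPartition) : Multiset ℕ :=
  (Finset.range p.durfee).val.map fun i => p.hook i i

lemma conj_set_finite (p : IntPartition) (j : ℕ) : {i | j < p.parts i}.Finite := by
  apply p.finite_support.subset
  intro i hi
  simp only [Set.mem_setOf_eq] at hi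
  simp only [Function.mem_support]
  omega

/-- The conjugate partition, as a `Partition`. -/
noncomputable def conjugate (p : IntPartition) : IntPartition where
  parts := p.conj
  antitone := fun a b hab =>
    Set.ncard_le_ncard (fun i hi => lt_of_le_of_lt hab hi) (p.conj_set_finite a)
  finite_support := by
    apply (Set.finite_Iio (p.parts 0)).subset
    intro j hj
    obtain ⟨i, hi⟩ := Set.nonempty_of_ncard_ne_zero hj
    exact lt_of_lt_of_le hi (p.antitone (Nat.zero_le i))

end IntPartition

/-- "Infinite" product `∏_{k ≥ 1} f k` of power series, defined coefficientwise;
this is the honest infinite product whenever `f k ≡ 1 mod X^k`. -/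
noncomputable def Pinf {R : Type*} [CommRing R] (f : ℕ → PowerSeries R) : PowerSeries R :=
  PowerSeries.mk fun n => PowerSeries.coeff n (∏ k ∈ Finset.range (n + 1), f (k + 1))

/-- The Euler-type product `E R m = ∏_{k ≥ 1} (1 - x^{m k}) = (q^m; q^m)_∞`. -/
noncomputable def E (R : Type*) [CommRing R] (m : ℕ) : PowerSeries R :=
  Pinf fun k => 1 - PowerSeries.X ^ (m * k)

/-- The binomial series `(1 - x^m)^a` for an exponent `a` in a binomial ring. -/
noncomputable def binomSeries {R : Type*} [CommRing R] [BinomialRing R] (a : R) (m : ℕ) :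
    PowerSeries R :=
  PowerSeries.mk fun n => if m ∣ n then (-1) ^ (n / m) * Ring.choose a (n / m) else 0

/-- `m` is the position of a vertical step (a `0`) in the canonical bi-infinite binary
word of the partition `p`. -/
def zeroPos (p : IntPartition) (m : ℤ) : Prop := ∃ i : ℕ, (p.parts i : ℤ) - i - 1 = m

/-- The Littlewood decomposition, as a relation: `core` and `quot` are the `t`-core and
`t`-quotient of `lam`, expressed via the binary-word encoding: the `k`-th subsequence of
the word of `lam` is the word of `quot k` (up to the shift `s k`), and the `k`-th
subsequence of the word of `core` is the corresponding flushed word `...000111...` with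
the same charge. -/
def IsLittlewood (t : ℕ) (lam core : IntPartition) (quot : ℕ → IntPartition) : Prop :=
  ∃ s : ℕ → ℤ,
    (∀ k < t, ∀ j : ℤ, zeroPos (quot k) j ↔ zeroPos lam (t * (j + s k) + k)) ∧
    (∀ k < t, ∀ j : ℤ, zeroPos core (t * (j + s k) + k) ↔ j < 0)

namespace SCDD


/-- A finite down-closed subset of `ℕ` equals `Iio` of its cardinality. -/
lemma downclosed_eq_Iio {A : Set ℕ} (hfin : A.Finite)
    (hdc : ∀ ⦃i j : ℕ⦄, i ∈ A → j ≤ i → j ∈ A) :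
    A = Set.Iio A.ncard := by
  ext n
  simp only [Set.mem_Iio]
  constructor
  · intro hn
    have h1 : Set.Iic n ⊆ A := fun j hj => hdc hn hj
    have h2 := Set.ncard_le_ncard h1 hfin
    rw [show Set.Iic n = ↑(Finset.Iic n) from (Finset.coe_Iic n).symm,
      Set.ncard_coe_finset, Nat.card_Iic] at h2
    omega
  · intro hn
    by_contra hmem
    have h2 : A ⊆ Set.Iio n := by
      intro m hm
      by_contra hmn
      simp only [Set.mem_Iio, not_lt] at hmn
      exact hmem (hdc hm hmn)
    have h3 := Set.ncard_le_ncard h2 (Set.finite_Iio n)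
    rw [show Set.Iio n = ↑(Finset.range n) from (Finset.coe_range n).symm,
      Set.ncard_coe_finset, Finset.card_range] at h3
    omega

lemma ncard_Iio (n : ℕ) : (Set.Iio n).ncard = n := by
  rw [show Set.Iio n = ↑(Finset.range n) from (Finset.coe_range n).symm,
    Set.ncard_coe_finset, Finset.card_range]

/-- Conjugate of an antitone finitely supported function. -/
noncomputable def conjFn (T : ℕ → ℕ) (j : ℕ) : ℕ := {i | j < T i}.ncard

lemma level_finite {T : ℕ → ℕ} (hfin : (Function.support T).Finite) (j : ℕ) :
    {i | j < T i}.Finite :=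
  hfin.subset (fun i hi => by
    simp only [Set.mem_setOf_eq] at hi
    simp only [Function.mem_support]; omega)

lemma level_eq_Iio {T : ℕ → ℕ} (hT : Antitone T) (hfin : (Function.support T).Finite)
    (j : ℕ) : {i | j < T i} = Set.Iio (conjFn T j) :=
  downclosed_eq_Iio (level_finite hfin j)
    (fun i k hi hk => lt_of_lt_of_le hi (hT hk))

lemma lt_conjFn_iff {T : ℕ → ℕ} (hT : Antitone T) (hfin : (Function.support T).Finite)
    {i j : ℕ} : i < conjFn T j ↔ j < T i := by
  have h := level_eq_Iio hT hfin j
  constructor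
  · intro hlt
    have : i ∈ {i | j < T i} := h ▸ (Set.mem_Iio.mpr hlt)
    exact this
  · intro hlt
    have h2 : i ∈ Set.Iio (conjFn T j) := h ▸ hlt
    exact h2

lemma conjFn_antitone' {T : ℕ → ℕ} (hfin : (Function.support T).Finite) :
    Antitone (conjFn T) := by
  intro a b hab
  exact Set.ncard_le_ncard (fun i hi => lt_of_le_of_lt hab hi) (level_finite hfin a)

lemma conjFn_eq_zero {T : ℕ → ℕ} (hT : Antitone T) {j : ℕ} (h : T 0 ≤ j) :
    conjFn T j = 0 := by
  have he : {i | j < T i} = ∅ := by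
    ext i; simp only [Set.mem_setOf_eq, Set.mem_empty_iff_false, iff_false, not_lt]
    exact le_trans (hT (Nat.zero_le i)) h
  rw [conjFn, he, Set.ncard_empty]

lemma conjFn_support {T : ℕ → ℕ} (hT : Antitone T) :
    (Function.support (conjFn T)).Finite := by
  apply (Set.finite_Iio (T 0)).subset
  intro j hj
  simp only [Function.mem_support] at hj
  simp only [Set.mem_Iio]
  by_contra h
  exact hj (conjFn_eq_zero hT (by omega))

lemma conjFn_conjFn {T : ℕ → ℕ} (hT : Antitone T) (hfin : (Function.support T).Finite) :
    conjFn (conjFn T) = T := by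
  funext i
  have h1 : {j | i < conjFn T j} = Set.Iio (T i) := by
    ext j
    simp only [Set.mem_setOf_eq, Set.mem_Iio]
    exact lt_conjFn_iff hT hfin
  rw [conjFn, h1, ncard_Iio]

lemma conjFn_eq_card {T : ℕ → ℕ} {d : ℕ} (hd : ∀ i, d ≤ i → T i = 0) (j : ℕ) :
    conjFn T j = ((Finset.range d).filter (fun i => j < T i)).card := by
  rw [conjFn, show {i | j < T i} = ↑((Finset.range d).filter (fun i => j < T i)) by
    ext i
    simp only [Set.mem_setOf_eq, Finset.coe_filter, Finset.mem_range, Set.mem_setOf_eq]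
    constructor
    · intro h
      refine ⟨?_, h⟩
      by_contra hh
      rw [hd i (by omega)] at h; omega
    · exact fun h => h.2, Set.ncard_coe_finset]

lemma sum_conjFn {T : ℕ → ℕ} (hT : Antitone T) {d N : ℕ}
    (hd : ∀ i, d ≤ i → T i = 0) (hN : T 0 ≤ N) :
    ∑ m ∈ Finset.range N, conjFn T m = ∑ i ∈ Finset.range d, T i := by
  calc ∑ m ∈ Finset.range N, conjFn T m
      = ∑ m ∈ Finset.range N, ∑ i ∈ Finset.range d, (if m < T i then 1 else 0) := by
        refine Finset.sum_congr rfl fun m _ => ?_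
        rw [conjFn_eq_card hd m, Finset.card_filter]
    _ = ∑ i ∈ Finset.range d, ∑ m ∈ Finset.range N, (if m < T i then 1 else 0) :=
        Finset.sum_comm
    _ = ∑ i ∈ Finset.range d, T i := by
        refine Finset.sum_congr rfl fun i _ => ?_
        rw [← Finset.card_filter]
        have he : (Finset.range N).filter (fun m => m < T i) = Finset.range (T i) := by
          ext m
          simp only [Finset.mem_filter, Finset.mem_range]
          have : T i ≤ N := le_trans (hT (Nat.zero_le i)) hN
          omega
        rw [he, Finset.card_range]


/-- helper: strict mono from Fin into ℕ grows at least linearly -/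
lemma strictMono_fin_le {n : ℕ} (e : Fin n → ℕ) (he : StrictMono e) :
    ∀ j : ℕ, ∀ h : j < n, ∀ h0 : 0 < n, j + e ⟨0, h0⟩ ≤ e ⟨j, h⟩ := by
  intro j
  induction j with
  | zero => intro h h0; simp
  | succ k ih =>
    intro h h0
    have h1 : k < n := by omega
    have h2 := ih h1 h0
    have h3 : e ⟨k, h1⟩ < e ⟨k + 1, h⟩ := he (by simp [Fin.lt_def])
    omega

/-- The descending enumeration of a finset of naturals, padded with `0`. -/
noncomputable def sFun (S : Finset ℕ) (i : ℕ) : ℕ :=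
  if h : i < S.card then S.orderEmbOfFin rfl ⟨S.card - 1 - i, by omega⟩ else 0

lemma sFun_mem {S : Finset ℕ} {i : ℕ} (h : i < S.card) : sFun S i ∈ S := by
  rw [sFun, dif_pos h]
  exact Finset.orderEmbOfFin_mem S rfl _

lemma sFun_strictAnti {S : Finset ℕ} {i j : ℕ} (hij : i < j) (hj : j < S.card) :
    sFun S j < sFun S i := by
  rw [sFun, sFun, dif_pos hj, dif_pos (by omega)]
  exact (S.orderEmbOfFin rfl).strictMono (by simp [Fin.lt_def]; omega)

lemma sFun_ge {S : Finset ℕ} (hS : 0 ∉ S) {i : ℕ} (h : i < S.card) :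
    S.card - i ≤ sFun S i := by
  rw [sFun, dif_pos h]
  have h0 : 0 < S.card := by omega
  have h1 := strictMono_fin_le _ (S.orderEmbOfFin rfl).strictMono (S.card - 1 - i) (by omega) h0
  have h2 : S.orderEmbOfFin rfl ⟨0, h0⟩ ∈ S := Finset.orderEmbOfFin_mem S rfl _
  have h3 : 0 < S.orderEmbOfFin rfl ⟨0, h0⟩ := by
    rcases Nat.eq_zero_or_pos (S.orderEmbOfFin rfl ⟨0, h0⟩) with he | he
    · exact absurd (he ▸ h2) hS
    · exact he
  omega

lemma sFun_image (S : Finset ℕ) : (Finset.range S.card).image (sFun S) = S := by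
  apply Finset.eq_of_subset_of_card_le
  · intro x hx
    obtain ⟨i, hi, rfl⟩ := Finset.mem_image.mp hx
    exact sFun_mem (Finset.mem_range.mp hi)
  · rw [Finset.card_image_of_injOn, Finset.card_range]
    intro i hi j hj hij
    simp only [Finset.coe_range, Set.mem_Iio] at hi hj
    rcases lt_trichotomy i j with h | h | h
    · have := sFun_strictAnti h hj; omega
    · exact h
    · have := sFun_strictAnti h hi; omega

lemma sFun_injOn (S : Finset ℕ) :
    Set.InjOn (sFun S) ↑(Finset.range S.card) := by
  intro i hi j hj hij
  simp only [Finset.coe_range, Set.mem_Iio] at hi hj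
  rcases lt_trichotomy i j with h | h | h
  · have := sFun_strictAnti h hj; omega
  · exact h
  · have := sFun_strictAnti h hi; omega

lemma sFun_val (S : Finset ℕ) :
    (Finset.range S.card).val.map (sFun S) = S.val := by
  have h1 : ((Finset.range S.card).image (sFun S)).val
      = (Finset.range S.card).val.map (sFun S) := by
    rw [Finset.image_val, Multiset.dedup_eq_self.mpr]
    exact Multiset.Nodup.map_on
      (fun i hi j hj => sFun_injOn S (by simpa using hi) (by simpa using hj))
      (Finset.range S.card).nodup
  rw [← h1, sFun_image]

/-- uniqueness: the descending enumeration of the image of a strictly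
decreasing map on `range d` is that map. -/
lemma sFun_unique {d : ℕ} {t : ℕ → ℕ}
    (ht : ∀ i j : ℕ, i < j → j < d → t j < t i) {i : ℕ} (hi : i < d) :
    sFun ((Finset.range d).image t) i = t i := by
  set S := (Finset.range d).image t with hSdef
  have hinj : Set.InjOn t ↑(Finset.range d) := by
    intro a ha b hb hab
    simp only [Finset.coe_range, Set.mem_Iio] at ha hb
    rcases lt_trichotomy a b with h | h | h
    · have := ht a b h hb; omega
    · exact h
    · have := ht b a h ha; omega
  have hcard : S.card = d := by
    rw [hSdef, Finset.card_image_of_injOn hinj, Finset.card_range]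
  have hf : ∀ x : Fin S.card, t (d - 1 - (x : ℕ)) ∈ S := by
    intro x
    have hx : (x : ℕ) < d := by omega
    exact Finset.mem_image_of_mem t (Finset.mem_range.mpr (by omega))
  have hmono : StrictMono (fun x : Fin S.card => t (d - 1 - (x : ℕ))) := by
    intro a b hab
    have hab' : (a : ℕ) < b := hab
    have hb : (b : ℕ) < S.card := b.isLt
    exact ht _ _ (by omega) (by omega)
  have huniq := Finset.orderEmbOfFin_unique (rfl : S.card = S.card) hf hmono
  rw [sFun, dif_pos (by omega : i < S.card)]
  have h2 := congrFun huniq ⟨S.card - 1 - i, by omega⟩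
  simp only at h2
  rw [← h2]
  congr 1
  omega

lemma sFun_zero {S : Finset ℕ} {i : ℕ} (h : S.card ≤ i) : sFun S i = 0 := by
  rw [sFun, dif_neg (by omega)]

end SCDD
namespace SCDD

@[ext] lemma IntPartition.ext' {p q : IntPartition} (h : p.parts = q.parts) : p = q := by
  cases p; cases q; simp_all

lemma conj_def (p : IntPartition) : p.conj = conjFn p.parts := rfl

lemma lt_conj_iff (p : IntPartition) {i j : ℕ} : i < p.conj j ↔ j < p.parts i :=
  lt_conjFn_iff p.antitone p.finite_support

lemma durfee_set (p : IntPartition) : {i | i < p.parts i} = Set.Iio p.durfee :=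
  downclosed_eq_Iio
    (p.finite_support.subset (fun i hi => by
      simp only [Set.mem_setOf_eq] at hi
      simp only [Function.mem_support]; omega))
    (by
      intro i j hi hj
      simp only [Set.mem_setOf_eq] at hi ⊢
      exact lt_of_le_of_lt hj (lt_of_lt_of_le hi (p.antitone hj)))

lemma lt_durfee_iff (p : IntPartition) {i : ℕ} : i < p.durfee ↔ i < p.parts i := by
  have h := durfee_set p
  constructor
  · intro hlt
    have : i ∈ {i | i < p.parts i} := h ▸ (Set.mem_Iio.mpr hlt)
    exact this
  · intro hlt
    have h2 : i ∈ Set.Iio p.durfee := h ▸ hlt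
    exact h2

lemma parts_le_durfee (p : IntPartition) {i : ℕ} (h : p.durfee ≤ i) :
    p.parts i ≤ p.durfee := by
  have h1 : p.parts i ≤ p.parts p.durfee := p.antitone h
  have h2 : ¬ p.durfee < p.parts p.durfee := by
    rw [← lt_durfee_iff]; omega
  omega

lemma lt_conj_self (p : IntPartition) {i : ℕ} (h : i < p.durfee) : i < p.conj i :=
  (lt_conj_iff p).mpr ((lt_durfee_iff p).mp h)

lemma parts_eventually_zero (p : IntPartition) : ∃ B, ∀ i, B ≤ i → p.parts i = 0 := by
  obtain ⟨B, hB⟩ := p.finite_support.bddAbove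
  refine ⟨B + 1, fun i hi => ?_⟩
  by_contra h
  have : i ∈ Function.support p.parts := by simp [Function.mem_support, h]
  have := hB this
  omega

lemma weight_eq_sum_range (p : IntPartition) {N : ℕ} (h : ∀ i, N ≤ i → p.parts i = 0) :
    p.weight = ∑ i ∈ Finset.range N, p.parts i := by
  rw [IntPartition.weight]
  apply Finset.sum_subset
  · intro i hi
    simp only [Set.Finite.mem_toFinset, Function.mem_support] at hi
    simp only [Finset.mem_range]
    by_contra hc
    exact hi (h i (by omega))
  · intro i _ hi
    simp only [Set.Finite.mem_toFinset, Function.mem_support, not_not] at hi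
    exact hi

/-! ### the build construction -/

structure BuildHyp (d : ℕ) (f g : ℕ → ℕ) : Prop where
  hf : Antitone f
  hg : Antitone g
  hf0 : ∀ i, d ≤ i → f i = 0
  hg0 : ∀ i, d ≤ i → g i = 0
  hfd : ∀ i, i < d → d ≤ f i
  hgd : ∀ i, i < d → d ≤ g i

variable {d : ℕ} {f g : ℕ → ℕ}

lemma BuildHyp.gsupp (H : BuildHyp d f g) : (Function.support g).Finite :=
  (Set.finite_Iio d).subset (fun i hi => by
    simp only [Function.mem_support] at hi
    simp only [Set.mem_Iio]
    by_contra h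
    exact hi (H.hg0 i (by omega)))

lemma BuildHyp.fsupp (H : BuildHyp d f g) : (Function.support f).Finite :=
  (Set.finite_Iio d).subset (fun i hi => by
    simp only [Function.mem_support] at hi
    simp only [Set.mem_Iio]
    by_contra h
    exact hi (H.hf0 i (by omega)))

lemma BuildHyp.conjg_le (H : BuildHyp d f g) (i : ℕ) : conjFn g i ≤ d := by
  rw [conjFn_eq_card H.hg0 i]
  calc ((Finset.range d).filter _).card ≤ (Finset.range d).card := Finset.card_filter_le _ _
    _ = d := Finset.card_range d

noncomputable def buildParts (d : ℕ) (f g : ℕ → ℕ) (i : ℕ) : ℕ :=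
  if i < d then f i else conjFn g i

noncomputable def build (H : BuildHyp d f g) : IntPartition where
  parts := buildParts d f g
  antitone := by
    intro i j hij
    rcases Nat.lt_or_ge j d with hj | hj
    · rw [buildParts, buildParts, if_pos hj, if_pos (by omega)]
      exact H.hf hij
    · rcases Nat.lt_or_ge i d with hi | hi
      · rw [buildParts, buildParts, if_pos hi, if_neg (by omega)]
        exact le_trans (H.conjg_le j) (H.hfd i hi)
      · rw [buildParts, buildParts, if_neg (by omega), if_neg (by omega)]
        exact conjFn_antitone' H.gsupp hij
  finite_support := by
    apply (Set.finite_Iio (d + g 0)).subset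
    intro i hi
    simp only [Function.mem_support] at hi
    simp only [Set.mem_Iio]
    by_contra h
    apply hi
    rw [buildParts, if_neg (by omega)]
    exact conjFn_eq_zero H.hg (by omega)

lemma build_parts_lt (H : BuildHyp d f g) {i : ℕ} (hi : i < d) :
    (build H).parts i = f i := if_pos hi

lemma build_parts_ge (H : BuildHyp d f g) {i : ℕ} (hi : d ≤ i) :
    (build H).parts i = conjFn g i := if_neg (by omega)

lemma build_conj (H : BuildHyp d f g) (j : ℕ) :
    (build H).conj j = if j < d then g j else conjFn f j := by
  rcases Nat.lt_or_ge j d with hj | hj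
  · rw [if_pos hj]
    have hset : {i | j < (build H).parts i} = Set.Iio (g j) := by
      ext i
      simp only [Set.mem_setOf_eq, Set.mem_Iio]
      rcases Nat.lt_or_ge i d with hi | hi
      · rw [build_parts_lt H hi]
        have h1 : j < f i := lt_of_lt_of_le hj (H.hfd i hi)
        have h2 : i < g j := lt_of_lt_of_le hi (H.hgd j hj)
        simp [h1, h2]
      · rw [build_parts_ge H hi]
        conv_rhs => rw [← conjFn_conjFn H.hg H.gsupp]
        exact (lt_conjFn_iff (conjFn_antitone' H.gsupp) (conjFn_support H.hg)).symm
    rw [IntPartition.conj, hset, ncard_Iio]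
  · rw [if_neg (by omega)]
    have hset : {i | j < (build H).parts i} = {i | j < f i} := by
      ext i
      simp only [Set.mem_setOf_eq]
      rcases Nat.lt_or_ge i d with hi | hi
      · rw [build_parts_lt H hi]
      · rw [build_parts_ge H hi]
        have h1 : conjFn g i ≤ d := H.conjg_le i
        have h2 : f i = 0 := H.hf0 i hi
        omega
    rw [IntPartition.conj, hset]
    rfl

lemma build_durfee (H : BuildHyp d f g) : (build H).durfee = d := by
  have hset : {i | i < (build H).parts i} = Set.Iio d := by
    ext i
    simp only [Set.mem_setOf_eq, Set.mem_Iio]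
    rcases Nat.lt_or_ge i d with hi | hi
    · rw [build_parts_lt H hi]
      have := H.hfd i hi
      simp only [iff_true, hi]
      omega
    · rw [build_parts_ge H hi]
      have := H.conjg_le i
      omega
  rw [IntPartition.durfee, hset, ncard_Iio]

lemma build_weight (H : BuildHyp d f g) :
    (build H).weight + d * d = ∑ i ∈ Finset.range d, f i + ∑ i ∈ Finset.range d, g i := by
  set N := d + g 0 with hN
  have hzero : ∀ i, N ≤ i → (build H).parts i = 0 := by
    intro i hi
    rw [build_parts_ge H (by omega)]
    exact conjFn_eq_zero H.hg (by omega)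
  have h1 : (build H).weight = ∑ i ∈ Finset.range d, f i + ∑ i ∈ Finset.Ico d N, conjFn g i := by
    rw [weight_eq_sum_range (build H) hzero, Finset.range_eq_Ico,
      ← Finset.sum_Ico_consecutive _ (Nat.zero_le d) (by omega : d ≤ N)]
    congr 1
    · rw [← Finset.range_eq_Ico]
      exact Finset.sum_congr rfl fun i hi => build_parts_lt H (Finset.mem_range.mp hi)
    · exact Finset.sum_congr rfl fun i hi => build_parts_ge H (Finset.mem_Ico.mp hi).1
  have h2 : ∑ i ∈ Finset.range d, conjFn g i + ∑ i ∈ Finset.Ico d N, conjFn g i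
      = ∑ i ∈ Finset.range N, conjFn g i := by
    rw [Finset.range_eq_Ico,
      Finset.sum_Ico_consecutive _ (Nat.zero_le d) (by omega : d ≤ N), ← Finset.range_eq_Ico]
  have h3 : ∑ i ∈ Finset.range N, conjFn g i = ∑ i ∈ Finset.range d, g i :=
    sum_conjFn H.hg H.hg0 (by omega)
  have h4 : ∑ i ∈ Finset.range d, conjFn g i = d * d := by
    have hterm : ∀ m, m < d → conjFn g m = d := by
      intro m hm
      have hset : {i | m < g i} = Set.Iio d := by
        ext i
        simp only [Set.mem_setOf_eq, Set.mem_Iio]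
        rcases Nat.lt_or_ge i d with hi | hi
        · have := H.hgd i hi; simp only [hi, iff_true]; omega
        · have := H.hg0 i hi; omega
      rw [conjFn, hset, ncard_Iio]
    rw [Finset.sum_congr rfl (fun m hm => hterm m (Finset.mem_range.mp hm)),
      Finset.sum_const, Finset.card_range, smul_eq_mul]
  omega

lemma build_principalHooks (H : BuildHyp d f g) :
    (build H).principalHooks
      = (Finset.range d).val.map (fun i => f i + g i - i - i - 1) := by
  rw [IntPartition.principalHooks, build_durfee H]
  apply Multiset.map_congr rfl
  intro i hi
  have hid : i < d := Finset.mem_range.mp (by exact hi)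
  rw [IntPartition.hook, build_parts_lt H hid, build_conj H i, if_pos hid]

end SCDD
namespace SCDD

lemma sFun_le_sub {S : Finset ℕ} : ∀ {j : ℕ}, ∀ {i : ℕ}, i ≤ j → j < S.card →
    sFun S j + (j - i) ≤ sFun S i := by
  intro j
  induction j with
  | zero => intro i hij _; interval_cases i; simp
  | succ k ih =>
    intro i hij hj
    rcases Nat.eq_or_lt_of_le hij with h | h
    · subst h; simp
    · have h1 : sFun S (k+1) < sFun S k := sFun_strictAnti (by omega) hj
      have h2 := ih (by omega : i ≤ k) (by omega)
      omega

/-- head-row function of the self-conjugate partition built from `S`. -/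
noncomputable def scF (S : Finset ℕ) (i : ℕ) : ℕ :=
  if i < S.card then sFun S i + i else 0

/-- head-row function of the doubled distinct partition built from `S`. -/
noncomputable def ddF (S : Finset ℕ) (i : ℕ) : ℕ :=
  if i < S.card then sFun S i + i + 1 else 0

lemma scF_antitone (S : Finset ℕ) : Antitone (scF S) := by
  intro i j hij
  rw [scF, scF]
  rcases Nat.lt_or_ge j S.card with hj | hj
  · rw [if_pos hj, if_pos (by omega)]
    have := sFun_le_sub hij hj
    omega
  · rw [if_neg (by omega)]
    omega

lemma ddF_antitone (S : Finset ℕ) : Antitone (ddF S) := by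
  intro i j hij
  rw [ddF, ddF]
  rcases Nat.lt_or_ge j S.card with hj | hj
  · rw [if_pos hj, if_pos (by omega)]
    have := sFun_le_sub hij hj
    omega
  · rw [if_neg (by omega)]
    omega

lemma scF_ge {S : Finset ℕ} (hS : 0 ∉ S) {i : ℕ} (hi : i < S.card) :
    S.card ≤ scF S i := by
  rw [scF, if_pos hi]
  have := sFun_ge hS hi
  omega

lemma ddF_ge {S : Finset ℕ} (hS : 0 ∉ S) {i : ℕ} (hi : i < S.card) :
    S.card ≤ ddF S i := by
  rw [ddF, if_pos hi]
  have := sFun_ge hS hi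
  omega

lemma scHyp {S : Finset ℕ} (hS : 0 ∉ S) : BuildHyp S.card (scF S) (scF S) :=
  ⟨scF_antitone S, scF_antitone S,
    fun i hi => by rw [scF, if_neg (by omega)],
    fun i hi => by rw [scF, if_neg (by omega)],
    fun i hi => scF_ge hS hi, fun i hi => scF_ge hS hi⟩

lemma ddHyp {S : Finset ℕ} (hS : 0 ∉ S) : BuildHyp S.card (ddF S) (scF S) :=
  ⟨ddF_antitone S, scF_antitone S,
    fun i hi => by rw [ddF, if_neg (by omega)],
    fun i hi => by rw [scF, if_neg (by omega)],
    fun i hi => ddF_ge hS hi, fun i hi => scF_ge hS hi⟩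

noncomputable def scBuild (S : Finset ℕ) (hS : 0 ∉ S) : IntPartition := build (scHyp hS)

noncomputable def ddBuild (S : Finset ℕ) (hS : 0 ∉ S) : IntPartition := build (ddHyp hS)

lemma scBuild_congr {S₁ S₂ : Finset ℕ} (h₁ : 0 ∉ S₁) (h₂ : 0 ∉ S₂) (h : S₁ = S₂) :
    scBuild S₁ h₁ = scBuild S₂ h₂ := by subst h; rfl

lemma ddBuild_congr {S₁ S₂ : Finset ℕ} (h₁ : 0 ∉ S₁) (h₂ : 0 ∉ S₂) (h : S₁ = S₂) :
    ddBuild S₁ h₁ = ddBuild S₂ h₂ := by subst h; rfl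

lemma scBuild_isSC {S : Finset ℕ} (hS : 0 ∉ S) : (scBuild S hS).IsSelfConjugate := by
  intro j
  show (scBuild S hS).conj j = (scBuild S hS).parts j
  rw [scBuild, build_conj (scHyp hS) j]
  rcases Nat.lt_or_ge j S.card with hj | hj
  · rw [if_pos hj, build_parts_lt _ hj]
  · rw [if_neg (by omega), build_parts_ge _ hj]

lemma durfee_scBuild {S : Finset ℕ} (hS : 0 ∉ S) : (scBuild S hS).durfee = S.card :=
  build_durfee _

lemma durfee_ddBuild {S : Finset ℕ} (hS : 0 ∉ S) : (ddBuild S hS).durfee = S.card :=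
  build_durfee _

lemma ddBuild_isDD {S : Finset ℕ} (hS : 0 ∉ S) : (ddBuild S hS).IsDoubledDistinct := by
  intro i hi
  rw [durfee_ddBuild hS] at hi
  rw [ddBuild, build_parts_lt _ hi, build_conj _ i, if_pos hi, ddF, scF, if_pos hi, if_pos hi]

lemma sum_scF (S : Finset ℕ) :
    ∑ i ∈ Finset.range S.card, scF S i
      = ∑ i ∈ Finset.range S.card, sFun S i + ∑ i ∈ Finset.range S.card, i := by
  rw [← Finset.sum_add_distrib]
  exact Finset.sum_congr rfl fun i hi => by
    rw [scF, if_pos (Finset.mem_range.mp hi)]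

lemma sum_ddF (S : Finset ℕ) :
    ∑ i ∈ Finset.range S.card, ddF S i
      = ∑ i ∈ Finset.range S.card, sFun S i + ∑ i ∈ Finset.range S.card, i + S.card := by
  have : ∑ i ∈ Finset.range S.card, ddF S i
      = ∑ i ∈ Finset.range S.card, (scF S i + 1) := by
    exact Finset.sum_congr rfl fun i hi => by
      rw [ddF, scF, if_pos (Finset.mem_range.mp hi), if_pos (Finset.mem_range.mp hi)]
  rw [this, Finset.sum_add_distrib, sum_scF, Finset.sum_const, Finset.card_range,
    smul_eq_mul, mul_one]

lemma sum_sFun_pred {S : Finset ℕ} (hS : 0 ∉ S) :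
    ∑ a ∈ S, (2 * a - 1) + S.card = 2 * ∑ i ∈ Finset.range S.card, sFun S i := by
  have h1 : ∑ a ∈ S, (2 * a - 1) = ∑ i ∈ Finset.range S.card, (2 * sFun S i - 1) := by
    conv_lhs => rw [← sFun_image S]
    rw [Finset.sum_image (fun x hx y hy h => sFun_injOn S (by simpa using hx) (by simpa using hy) h)]
  have h2 : ∑ i ∈ Finset.range S.card, (2 * sFun S i - 1) + S.card
      = 2 * ∑ i ∈ Finset.range S.card, sFun S i := by
    rw [Finset.mul_sum]
    have h3 : ∑ i ∈ Finset.range S.card, (2 * sFun S i - 1) + S.card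
        = ∑ i ∈ Finset.range S.card, ((2 * sFun S i - 1) + 1) := by
      rw [Finset.sum_add_distrib, Finset.sum_const, Finset.card_range, smul_eq_mul, mul_one]
    rw [h3]
    exact Finset.sum_congr rfl fun i hi => by
      have h4 : i < S.card := Finset.mem_range.mp hi
      have h5 := sFun_ge hS h4
      omega
  omega

lemma sum_sFun {S : Finset ℕ} :
    ∑ a ∈ S, 2 * a = 2 * ∑ i ∈ Finset.range S.card, sFun S i := by
  have h1 : ∑ a ∈ S, 2 * a = ∑ i ∈ Finset.range S.card, 2 * sFun S i := by
    conv_lhs => rw [← sFun_image S]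
    rw [Finset.sum_image (fun x hx y hy h => sFun_injOn S (by simpa using hx) (by simpa using hy) h)]
  rw [h1, Finset.mul_sum]

lemma weight_scBuild {S : Finset ℕ} (hS : 0 ∉ S) :
    (scBuild S hS).weight = ∑ a ∈ S, (2 * a - 1) := by
  have h1 := build_weight (scHyp hS)
  rw [sum_scF] at h1
  have h2 := sum_sFun_pred hS
  have h3 := Finset.sum_range_id_mul_two S.card
  have h4 : S.card * (S.card - 1) + S.card = S.card * S.card := by
    rcases hc : S.card with _ | n
    · simp
    · simp only [Nat.succ_sub_one]
      ring
  rw [scBuild]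
  omega

lemma weight_ddBuild {S : Finset ℕ} (hS : 0 ∉ S) :
    (ddBuild S hS).weight = ∑ a ∈ S, 2 * a := by
  have h1 := build_weight (ddHyp hS)
  rw [sum_scF, sum_ddF] at h1
  have h2 := sum_sFun (S := S)
  have h3 := Finset.sum_range_id_mul_two S.card
  have h4 : S.card * (S.card - 1) + S.card = S.card * S.card := by
    rcases hc : S.card with _ | n
    · simp
    · simp only [Nat.succ_sub_one]
      ring
  rw [ddBuild]
  omega

lemma principalHooks_scBuild {S : Finset ℕ} (hS : 0 ∉ S) :
    (scBuild S hS).principalHooks = S.val.map (fun a => 2 * a - 1) := by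
  rw [scBuild, build_principalHooks]
  have h1 : (Finset.range S.card).val.map (fun i => scF S i + scF S i - i - i - 1)
      = (Finset.range S.card).val.map (fun i => 2 * sFun S i - 1) := by
    apply Multiset.map_congr rfl
    intro i hi
    have hid : i < S.card := Finset.mem_range.mp (by exact hi)
    rw [scF, if_pos hid]
    omega
  rw [h1, show (fun i => 2 * sFun S i - 1) = (fun a => 2 * a - 1) ∘ (sFun S) from rfl,
    ← Multiset.map_map, sFun_val]

lemma principalHooks_ddBuild {S : Finset ℕ} (hS : 0 ∉ S) :
    (ddBuild S hS).principalHooks = S.val.map (fun a => 2 * a) := by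
  rw [ddBuild, build_principalHooks]
  have h1 : (Finset.range S.card).val.map (fun i => ddF S i + scF S i - i - i - 1)
      = (Finset.range S.card).val.map (fun i => 2 * sFun S i) := by
    apply Multiset.map_congr rfl
    intro i hi
    have hid : i < S.card := Finset.mem_range.mp (by exact hi)
    rw [ddF, scF, if_pos hid, if_pos hid]
    omega
  rw [h1, show (fun i => 2 * sFun S i) = (fun a => 2 * a) ∘ (sFun S) from rfl,
    ← Multiset.map_map, sFun_val]

end SCDD
namespace SCDD

noncomputable def scInv (p : IntPartition) : Finset ℕ :=
  (Finset.range p.durfee).image (fun i => p.parts i - i)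

noncomputable def ddInv (p : IntPartition) : Finset ℕ :=
  (Finset.range p.durfee).image (fun i => p.parts i - i - 1)

lemma scInv_strictAnti (p : IntPartition) {i j : ℕ} (hij : i < j) (hj : j < p.durfee) :
    p.parts j - j < p.parts i - i := by
  have h1 : p.parts j ≤ p.parts i := p.antitone (by omega)
  have h2 : i < p.parts i := (lt_durfee_iff p).mp (by omega)
  have h3 : j < p.parts j := (lt_durfee_iff p).mp hj
  omega

lemma scInv_zero (p : IntPartition) : 0 ∉ scInv p := by
  rw [scInv]
  intro h
  obtain ⟨i, hi, he⟩ := Finset.mem_image.mp h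
  have h2 : i < p.parts i := (lt_durfee_iff p).mp (Finset.mem_range.mp hi)
  omega

lemma scInv_card (p : IntPartition) : (scInv p).card = p.durfee := by
  rw [scInv, Finset.card_image_of_injOn, Finset.card_range]
  intro i hi j hj he
  simp only [Finset.coe_range, Set.mem_Iio] at hi hj
  have he' : p.parts i - i = p.parts j - j := he
  rcases lt_trichotomy i j with h | h | h
  · have := scInv_strictAnti p h hj; omega
  · exact h
  · have := scInv_strictAnti p h hi; omega

lemma scInv_sFun (p : IntPartition) {i : ℕ} (hi : i < p.durfee) :
    sFun (scInv p) i = p.parts i - i := by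
  rw [scInv]
  exact sFun_unique (fun a b hab hb => scInv_strictAnti p hab hb) hi

/-- parts of a doubled distinct partition in the Durfee square are large. -/
lemma dd_parts_ge {p : IntPartition} (hp : p.IsDoubledDistinct) {i : ℕ}
    (hi : i < p.durfee) : i + 2 ≤ p.parts i := by
  have h1 := lt_conj_self p hi
  have h2 := hp i hi
  omega

lemma ddInv_strictAnti {p : IntPartition} (hp : p.IsDoubledDistinct) {i j : ℕ}
    (hij : i < j) (hj : j < p.durfee) :
    p.parts j - j - 1 < p.parts i - i - 1 := by
  have h1 : p.parts j ≤ p.parts i := p.antitone (by omega)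
  have h2 := dd_parts_ge hp (by omega : i < p.durfee)
  have h3 := dd_parts_ge hp hj
  omega

lemma ddInv_zero {p : IntPartition} (hp : p.IsDoubledDistinct) : 0 ∉ ddInv p := by
  rw [ddInv]
  intro h
  obtain ⟨i, hi, he⟩ := Finset.mem_image.mp h
  have h2 := dd_parts_ge hp (Finset.mem_range.mp hi)
  omega

lemma ddInv_card {p : IntPartition} (hp : p.IsDoubledDistinct) :
    (ddInv p).card = p.durfee := by
  rw [ddInv, Finset.card_image_of_injOn, Finset.card_range]
  intro i hi j hj he
  simp only [Finset.coe_range, Set.mem_Iio] at hi hj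
  have he' : p.parts i - i - 1 = p.parts j - j - 1 := he
  rcases lt_trichotomy i j with h | h | h
  · have := ddInv_strictAnti hp h hj; omega
  · exact h
  · have := ddInv_strictAnti hp h hi; omega

lemma ddInv_sFun {p : IntPartition} (hp : p.IsDoubledDistinct) {i : ℕ} (hi : i < p.durfee) :
    sFun (ddInv p) i = p.parts i - i - 1 := by
  rw [ddInv]
  exact sFun_unique (fun a b hab hb => ddInv_strictAnti hp hab hb) hi

/-- round trip: building from the hook data of a self-conjugate partition gives it back. -/
lemma scBuild_scInv {p : IntPartition} (hp : p.IsSelfConjugate) :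
    scBuild (scInv p) (scInv_zero p) = p := by
  set d := p.durfee with hd
  have hcard : (scInv p).card = d := scInv_card p
  have hscF : ∀ k, scF (scInv p) k = if k < d then p.parts k else 0 := by
    intro k
    rw [scF, hcard]
    rcases Nat.lt_or_ge k d with hk | hk
    · rw [if_pos hk, if_pos hk, scInv_sFun p hk]
      have := (lt_durfee_iff p).mp hk
      omega
    · rw [if_neg (by omega), if_neg (by omega)]
  apply IntPartition.ext'
  funext i
  rcases Nat.lt_or_ge i d with hi | hi
  · rw [scBuild, build_parts_lt _ (by omega : i < (scInv p).card), hscF, if_pos hi]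
  · rw [scBuild, build_parts_ge _ (by omega : (scInv p).card ≤ i)]
    have hpe : p.parts i = p.conj i := (hp i).symm
    rw [hpe, IntPartition.conj, conjFn]
    congr 1
    ext k
    simp only [Set.mem_setOf_eq]
    rw [hscF]
    rcases Nat.lt_or_ge k d with hk | hk
    · rw [if_pos hk]
    · rw [if_neg (by omega)]
      have h1 : p.parts k ≤ d := le_trans (p.antitone hk) (parts_le_durfee p (le_refl d))
      omega

/-- round trip: the hook data of `scBuild S` is `S`. -/
lemma scInv_scBuild {S : Finset ℕ} (hS : 0 ∉ S) : scInv (scBuild S hS) = S := by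
  rw [scInv, durfee_scBuild hS]
  have h1 : ∀ i ∈ Finset.range S.card, (scBuild S hS).parts i - i = sFun S i := by
    intro i hi
    have hid : i < S.card := Finset.mem_range.mp hi
    rw [scBuild, build_parts_lt _ hid, scF, if_pos hid]
    omega
  calc (Finset.range S.card).image (fun i => (scBuild S hS).parts i - i)
      = (Finset.range S.card).image (sFun S) :=
        Finset.image_congr (fun i hi => h1 i (by simpa using hi))
    _ = S := sFun_image S

lemma ddInv_ddBuild {S : Finset ℕ} (hS : 0 ∉ S) : ddInv (ddBuild S hS) = S := by
  rw [ddInv, durfee_ddBuild hS]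
  have h1 : ∀ i ∈ Finset.range S.card, (ddBuild S hS).parts i - i - 1 = sFun S i := by
    intro i hi
    have hid : i < S.card := Finset.mem_range.mp hi
    rw [ddBuild, build_parts_lt _ hid, ddF, if_pos hid]
    omega
  calc (Finset.range S.card).image (fun i => (ddBuild S hS).parts i - i - 1)
      = (Finset.range S.card).image (sFun S) :=
        Finset.image_congr (fun i hi => h1 i (by simpa using hi))
    _ = S := sFun_image S

/-- round trip: building from the hook data of a doubled distinct partition gives it back. -/
lemma ddBuild_ddInv {p : IntPartition} (hp : p.IsDoubledDistinct) :
    ddBuild (ddInv p) (ddInv_zero hp) = p := by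
  set d := p.durfee with hd
  have hcard : (ddInv p).card = d := ddInv_card hp
  have hddF : ∀ k, ddF (ddInv p) k = if k < d then p.parts k else 0 := by
    intro k
    rw [ddF, hcard]
    rcases Nat.lt_or_ge k d with hk | hk
    · rw [if_pos hk, if_pos hk, ddInv_sFun hp hk]
      have := dd_parts_ge hp hk
      omega
    · rw [if_neg (by omega), if_neg (by omega)]
  have hscF : ∀ k, scF (ddInv p) k = if k < d then p.parts k - 1 else 0 := by
    intro k
    rw [scF, hcard]
    rcases Nat.lt_or_ge k d with hk | hk
    · rw [if_pos hk, if_pos hk, ddInv_sFun hp hk]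
      have := dd_parts_ge hp hk
      omega
    · rw [if_neg (by omega), if_neg (by omega)]
  apply IntPartition.ext'
  funext i
  rcases Nat.lt_or_ge i d with hi | hi
  · rw [ddBuild, build_parts_lt _ (by omega : i < (ddInv p).card), hddF, if_pos hi]
  · -- tail analysis
    rw [ddBuild, build_parts_ge _ (by omega : (ddInv p).card ≤ i)]
    -- the tail of p
    set t : ℕ → ℕ := fun m => p.parts (m + d) with ht
    have htanti : Antitone t := fun a b hab => p.antitone (by omega)
    have htfin : (Function.support t).Finite := by
      obtain ⟨B, hB⟩ := parts_eventually_zero p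
      apply (Set.finite_Iio B).subset
      intro m hm
      simp only [Function.mem_support, ht] at hm
      simp only [Set.mem_Iio]
      by_contra h
      exact hm (hB (m + d) (by omega))
    have hparts_big : ∀ j, j < d → ∀ m, m < d → m < p.parts j := by
      intro j hj m hm
      have h1 : p.parts j ≥ p.parts (max j m) := p.antitone (le_max_left j m)
      have h2 := (lt_durfee_iff p).mp (show max j m < d by omega)
      omega
    have hconj_ge : ∀ m, m < d → d ≤ p.conj m := by
      intro m hm
      have h1 : d - 1 < p.conj m := (lt_conj_iff p).mpr (hparts_big (d-1) (by omega) m hm)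
      omega
    have hstep1 : ∀ m, m < d → conjFn t m = p.conj m - d := by
      intro m hm
      have hkey : ∀ i', i' < conjFn t m ↔ i' + d < p.conj m := by
        intro i'
        rw [lt_conjFn_iff htanti htfin]
        constructor
        · intro h; exact (lt_conj_iff p).mpr h
        · intro h; exact (lt_conj_iff p).mp h
      have hge := hconj_ge m hm
      have hx : ¬ (conjFn t m + d < p.conj m) := fun hc =>
        lt_irrefl _ ((hkey (conjFn t m)).mpr hc)
      have hy : ¬ (p.conj m - d < conjFn t m) := fun hc => by
        have := (hkey (p.conj m - d)).mp hc
        omega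
      omega
    have hstep2 : ∀ m, d ≤ m → conjFn t m = 0 := by
      intro m hm
      apply conjFn_eq_zero htanti
      have h0 : t 0 = p.parts d := by
        show p.parts (0 + d) = p.parts d
        rw [Nat.zero_add]
      rw [h0]
      exact le_trans (parts_le_durfee p (le_refl d)) hm
    have hti : p.parts i = conjFn (conjFn t) (i - d) := by
      rw [conjFn_conjFn htanti htfin, ht]
      congr 1
      omega
    rw [hti, conjFn, conjFn]
    congr 1
    ext m
    simp only [Set.mem_setOf_eq]
    rw [hscF]
    rcases Nat.lt_or_ge m d with hm | hm
    · rw [if_pos hm, hstep1 m hm]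
      have h1 := hp m hm
      have h2 := hconj_ge m hm
      omega
    · rw [if_neg (by omega), hstep2 m hm]
      omega

end SCDD
namespace SCDD

noncomputable def merge (A B : Finset ℕ) : Finset ℕ :=
  A.image (fun a => 2 * a - 1) ∪ B.image (fun b => 2 * b)

lemma merge_disjoint {A B : Finset ℕ} (hA : 0 ∉ A) :
    Disjoint (A.image (fun a => 2 * a - 1)) (B.image (fun b => 2 * b)) := by
  rw [Finset.disjoint_left]
  rintro x hx hy
  obtain ⟨a, ha, rfl⟩ := Finset.mem_image.mp hx
  obtain ⟨b, hb, he⟩ := Finset.mem_image.mp hy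
  have ha0 : a ≠ 0 := fun h => hA (h ▸ ha)
  omega

lemma merge_zero {A B : Finset ℕ} (hA : 0 ∉ A) (hB : 0 ∉ B) : 0 ∉ merge A B := by
  rw [merge]
  intro h
  rcases Finset.mem_union.mp h with h | h
  · obtain ⟨a, ha, he⟩ := Finset.mem_image.mp h
    have : a ≠ 0 := fun h0 => hA (h0 ▸ ha)
    omega
  · obtain ⟨b, hb, he⟩ := Finset.mem_image.mp h
    have : b ≠ 0 := fun h0 => hB (h0 ▸ hb)
    omega

lemma merge_val {A B : Finset ℕ} (hA : 0 ∉ A) :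
    (merge A B).val = A.val.map (fun a => 2 * a - 1) + B.val.map (fun b => 2 * b) := by
  rw [merge, ← Finset.disjUnion_eq_union _ _ (merge_disjoint hA)]
  rw [show (Finset.disjUnion _ _ (merge_disjoint hA)).val
      = (A.image (fun a => 2 * a - 1)).val + (B.image (fun b => 2 * b)).val from rfl]
  congr 1
  · rw [Finset.image_val, Multiset.dedup_eq_self.mpr]
    apply Multiset.Nodup.map_on _ A.nodup
    intro x hx y hy he
    have hx0 : x ≠ 0 := fun h => hA (h ▸ (by simpa using hx))
    have hy0 : y ≠ 0 := fun h => hA (h ▸ (by simpa using hy))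
    omega
  · rw [Finset.image_val, Multiset.dedup_eq_self.mpr]
    apply Multiset.Nodup.map_on _ B.nodup
    intro x hx y hy he
    omega

lemma merge_card {A B : Finset ℕ} (hA : 0 ∉ A) :
    (merge A B).card = A.card + B.card := by
  have h := congrArg Multiset.card (merge_val (B := B) hA)
  simpa using h

lemma merge_sum {A B : Finset ℕ} (hA : 0 ∉ A) :
    ∑ x ∈ merge A B, 2 * x
      = 2 * ((∑ a ∈ A, (2 * a - 1)) + ∑ b ∈ B, 2 * b) := by
  rw [merge, Finset.sum_union (merge_disjoint hA)]
  have hs1 : ∑ x ∈ A.image (fun a => 2 * a - 1), 2 * x = ∑ a ∈ A, 2 * (2 * a - 1) :=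
    Finset.sum_image (fun x hx y hy he => by
      have hx0 : x ≠ 0 := fun h => hA (h ▸ hx)
      have hy0 : y ≠ 0 := fun h => hA (h ▸ hy)
      omega)
  have hs2 : ∑ x ∈ B.image (fun b => 2 * b), 2 * x = ∑ b ∈ B, 2 * (2 * b) :=
    Finset.sum_image (fun x hx y hy he => by omega)
  rw [hs1, hs2, mul_add, Finset.mul_sum, Finset.mul_sum]

noncomputable def oddPart (S : Finset ℕ) : Finset ℕ :=
  (S.filter (fun h => ¬ 2 ∣ h)).image (fun h => (h + 1) / 2)

noncomputable def evenPart (S : Finset ℕ) : Finset ℕ :=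
  (S.filter (fun h => 2 ∣ h)).image (fun h => h / 2)

lemma oddPart_zero (S : Finset ℕ) : 0 ∉ oddPart S := by
  rw [oddPart]
  intro h
  obtain ⟨x, hx, he⟩ := Finset.mem_image.mp h
  have h2 := (Finset.mem_filter.mp hx).2
  omega

lemma evenPart_zero {S : Finset ℕ} (hS : 0 ∉ S) : 0 ∉ evenPart S := by
  rw [evenPart]
  intro h
  obtain ⟨x, hx, he⟩ := Finset.mem_image.mp h
  have h1 := (Finset.mem_filter.mp hx).1
  have h2 := (Finset.mem_filter.mp hx).2
  have h3 : x ≠ 0 := fun h0 => hS (h0 ▸ h1)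
  omega

lemma oddPart_merge {A B : Finset ℕ} (hA : 0 ∉ A) : oddPart (merge A B) = A := by
  rw [oddPart, merge, Finset.filter_union]
  have h1 : (A.image (fun a => 2 * a - 1)).filter (fun h => ¬ 2 ∣ h)
      = A.image (fun a => 2 * a - 1) := by
    apply Finset.filter_true_of_mem
    intro x hx
    obtain ⟨a, ha, rfl⟩ := Finset.mem_image.mp hx
    have : a ≠ 0 := fun h => hA (h ▸ ha)
    omega
  have h2 : (B.image (fun b => 2 * b)).filter (fun h => ¬ 2 ∣ h) = ∅ := by
    rw [Finset.filter_eq_empty_iff]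
    intro x hx
    obtain ⟨b, hb, rfl⟩ := Finset.mem_image.mp hx
    exact not_not_intro (dvd_mul_right 2 b)
  rw [h1, h2, Finset.union_empty, Finset.image_image]
  have h3 : ∀ a ∈ (A : Finset ℕ), ((fun h => (h + 1) / 2) ∘ (fun a => 2 * a - 1)) a = id a := by
    intro a ha
    have : a ≠ 0 := fun h => hA (h ▸ ha)
    simp only [Function.comp, id]
    omega
  rw [Finset.image_congr (fun a ha => h3 a (by simpa using ha)), Finset.image_id]

lemma evenPart_merge {A B : Finset ℕ} (hA : 0 ∉ A) : evenPart (merge A B) = B := by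
  rw [evenPart, merge, Finset.filter_union]
  have h1 : (A.image (fun a => 2 * a - 1)).filter (fun h => 2 ∣ h) = ∅ := by
    rw [Finset.filter_eq_empty_iff]
    intro x hx
    obtain ⟨a, ha, rfl⟩ := Finset.mem_image.mp hx
    have : a ≠ 0 := fun h => hA (h ▸ ha)
    omega
  have h2 : (B.image (fun b => 2 * b)).filter (fun h => 2 ∣ h) = B.image (fun b => 2 * b) := by
    apply Finset.filter_true_of_mem
    intro x hx
    obtain ⟨b, hb, rfl⟩ := Finset.mem_image.mp hx
    exact dvd_mul_right 2 b
  rw [h1, h2, Finset.empty_union, Finset.image_image]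
  have h3 : ∀ b ∈ (B : Finset ℕ), ((fun h => h / 2) ∘ (fun b => 2 * b)) b = id b := by
    intro b hb
    simp only [Function.comp, id]
    omega
  rw [Finset.image_congr (fun b hb => h3 b (by simpa using hb)), Finset.image_id]

lemma merge_parts {S : Finset ℕ} (hS : 0 ∉ S) :
    merge (oddPart S) (evenPart S) = S := by
  ext x
  simp only [merge, oddPart, evenPart, Finset.mem_union, Finset.mem_image, Finset.mem_filter]
  constructor
  · rintro (⟨a, ⟨h, ⟨hhS, hodd⟩, rfl⟩, rfl⟩ | ⟨b, ⟨h, ⟨hhS, heven⟩, rfl⟩, rfl⟩)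
    · have he : 2 * ((h + 1) / 2) - 1 = h := by omega
      rw [he]; exact hhS
    · have he : 2 * (h / 2) = h := by omega
      rw [he]; exact hhS
  · intro hx
    by_cases hdvd : 2 ∣ x
    · right
      refine ⟨x / 2, ⟨x, ⟨hx, hdvd⟩, rfl⟩, by omega⟩
    · left
      refine ⟨(x + 1) / 2, ⟨x, ⟨hx, hdvd⟩, rfl⟩, by omega⟩

theorem main :
    ∃ Φ : {lm : IntPartition × IntPartition //
            lm.1.IsSelfConjugate ∧ lm.2.IsDoubledDistinct} ≃
          {ν : IntPartition // ν.IsDoubledDistinct},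
      ∀ x, ((Φ x).1.weight = 2 * (x.1.1.weight + x.1.2.weight)) ∧
        ((Φ x).1.delta = x.1.1.delta * x.1.2.delta) ∧
        ((Φ x).1.principalHooks =
          (x.1.1.principalHooks + x.1.2.principalHooks).map (fun h => 2 * h)) := by
  refine ⟨{
    toFun := fun x =>
      ⟨ddBuild (merge (scInv x.1.1) (ddInv x.1.2))
        (merge_zero (scInv_zero x.1.1) (ddInv_zero x.2.2)),
        ddBuild_isDD (merge_zero (scInv_zero x.1.1) (ddInv_zero x.2.2))⟩
    invFun := fun y =>
      ⟨(scBuild (oddPart (ddInv y.1)) (oddPart_zero (ddInv y.1)),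
        ddBuild (evenPart (ddInv y.1)) (evenPart_zero (S := ddInv y.1) (ddInv_zero y.2))),
        scBuild_isSC (oddPart_zero (ddInv y.1)),
        ddBuild_isDD (evenPart_zero (S := ddInv y.1) (ddInv_zero y.2))⟩
    left_inv := ?_
    right_inv := ?_ }, ?_⟩
  · rintro ⟨⟨l, m⟩, hl, hm⟩
    have hl' : l.IsSelfConjugate := hl
    have hm' : m.IsDoubledDistinct := hm
    apply Subtype.ext
    refine Prod.ext ?_ ?_
    · exact (scBuild_congr (oddPart_zero _) (scInv_zero l)
        (by rw [ddInv_ddBuild, oddPart_merge (scInv_zero l)])).trans (scBuild_scInv hl')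
    · exact (ddBuild_congr (evenPart_zero (ddInv_zero (ddBuild_isDD (merge_zero (scInv_zero _) (ddInv_zero hm'))))) (ddInv_zero hm')
        (by rw [ddInv_ddBuild, evenPart_merge (scInv_zero l)])).trans (ddBuild_ddInv hm')
  · rintro ⟨ν, hν⟩
    apply Subtype.ext
    exact (ddBuild_congr (merge_zero (scInv_zero _) (ddInv_zero (ddBuild_isDD (evenPart_zero (ddInv_zero hν))))) (ddInv_zero hν)
      (by rw [scInv_scBuild, ddInv_ddBuild, merge_parts (ddInv_zero hν)])).trans
      (ddBuild_ddInv hν)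
  · rintro ⟨⟨l, m⟩, hl, hm⟩
    have hl' : l.IsSelfConjugate := hl
    have hm' : m.IsDoubledDistinct := hm
    simp only [Equiv.coe_fn_mk]
    have hA : 0 ∉ scInv l := scInv_zero l
    have hB : 0 ∉ ddInv m := ddInv_zero hm'
    have hlw : l.weight = ∑ a ∈ scInv l, (2 * a - 1) := by
      conv_lhs => rw [← scBuild_scInv hl']
      rw [weight_scBuild hA]
    have hmw : m.weight = ∑ b ∈ ddInv m, 2 * b := by
      conv_lhs => rw [← ddBuild_ddInv hm']
      rw [weight_ddBuild hB]
    have hld : l.durfee = (scInv l).card := by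
      conv_lhs => rw [← scBuild_scInv hl']
      rw [durfee_scBuild hA]
    have hmd : m.durfee = (ddInv m).card := by
      conv_lhs => rw [← ddBuild_ddInv hm']
      rw [durfee_ddBuild hB]
    have hlh : l.principalHooks = (scInv l).val.map (fun a => 2 * a - 1) := by
      conv_lhs => rw [← scBuild_scInv hl']
      rw [principalHooks_scBuild hA]
    have hmh : m.principalHooks = (ddInv m).val.map (fun b => 2 * b) := by
      conv_lhs => rw [← ddBuild_ddInv hm']
      rw [principalHooks_ddBuild hB]
    refine ⟨?_, ?_, ?_⟩
    · show (ddBuild (merge (scInv l) (ddInv m)) _).weight = 2 * (l.weight + m.weight)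
      rw [weight_ddBuild (merge_zero hA hB), merge_sum hA, hlw, hmw]
    · show (ddBuild (merge (scInv l) (ddInv m)) _).delta = l.delta * m.delta
      rw [IntPartition.delta, IntPartition.delta, IntPartition.delta,
        durfee_ddBuild (merge_zero hA hB), merge_card hA, hld, hmd, pow_add]
    · show (ddBuild (merge (scInv l) (ddInv m)) _).principalHooks
        = (l.principalHooks + m.principalHooks).map (fun h => 2 * h)
      rw [principalHooks_ddBuild (merge_zero hA hB), merge_val hA, hlh, hmh]

end SCDD

theorem sc_dd_pairs_to_dd_bijection :
    ∃ Φ : {lm : IntPartition × IntPartition //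
            lm.1.IsSelfConjugate ∧ lm.2.IsDoubledDistinct} ≃
          {ν : IntPartition // ν.IsDoubledDistinct},
      ∀ x, ((Φ x).1.weight = 2 * (x.1.1.weight + x.1.2.weight)) ∧
        ((Φ x).1.delta = x.1.1.delta * x.1.2.delta) ∧
        ((Φ x).1.principalHooks =
          (x.1.1.principalHooks + x.1.2.principalHooks).map (fun h => 2 * h)) :=
  SCDD.main
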